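/- Let F ∈ End(V) be the left-shift nilpotent of a pyramid with longest row p_1, F^t the right shift, V_± as above, and let Z′(x) = x 1_{V_+}(1 + x F^t)^{-1} 1_{V′_−} + ∑_i φ′_x(u′_i) U′^i be the polynomial matrix associated to the pyramid p′ obtained by deleting the leftmost column (a polynomial in x of degree ≤ p_1 − 1, whose non-leading terms in the relevant components have degree ≤ p_1 − 3). Then the residue X := Res_x x^{-1} 1_{V_−^u ∩ V′^d_−} (1 + x^{-1}F)^{-1} Z′_{geo}(x) (F′)^t 1_{V′^d_−} equals −1_{V_−^u ∩ V′^d_−}, where Z′_{geo}(x) = x 1_{V_+}(1+xF^t)^{-1} 1_{V″_−}. Concretely: (−1)^{p_1} Res_x x^{−p_1+2} · 1_{V_−^u ∩ V′^d_−} F^{p_1−2} 1_{V_+} (1 + x F^t)^{-1} 1_{V″_−} (F′)^t 1_{V′^d_−} = −1_{V_−^u ∩ V′^d_−}. -/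

import Mathlib

/-- A "box" of the pyramid attached to the partition `p₁^{r₁} ⋯ p_s^{r_s}`. The last
coordinate is the position of the box in its row, counted from the right
(`0` = rightmost box). -/
abbrev PyramidBox {s : ℕ} (p r : Fin s → ℕ) : Type := (i : Fin s) × (Fin (r i) × Fin (p i))

/-- the residue computation for the pyramid.  With `F` the left shift of the
(right-aligned) pyramid, `Ft = Fᵗ` the right shift, `Pplus = 1_{V₊}` (rightmost boxes),
`W1 = 1_{V₋ᵘ ∩ V′₋ᵈ}` (leftmost boxes of rows of length exactly `p₁ - 1`),
`PVpp = 1_{V″₋}` (leftmost boxes after removing the two leftmost columns) and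
`PVpd = 1_{V′₋ᵈ}` (boxes of the second-leftmost column, position `p₁ - 2`), one has
`(−1)^{p₁} Res_x x^{−p₁+2} · 1_{V₋ᵘ ∩ V′₋ᵈ} F^{p₁−2} 1_{V₊} (1 + x Fᵗ)^{−1} 1_{V″₋} (F′)ᵗ 1_{V′₋ᵈ}
  = −1_{V₋ᵘ ∩ V′₋ᵈ}`,
where `(1 + x Fᵗ)^{-1} = ∑_m (−x)^m (Fᵗ)^m` (a finite geometric series), the residue is the
coefficient of `x^{p₁−3}` of the resulting polynomial with coefficients in `End V`, and
`(F′)ᵗ` agrees with `Fᵗ` on `V′`. -/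
theorem stmt17 {K : Type*} [Field K] [CharZero K]
    {V : Type*} [AddCommGroup V] [Module K V]
    {s : ℕ} (hs : 0 < s) (p r : Fin s → ℕ) (hp : StrictAnti p) (hp0 : ∀ i, 0 < p i)
    (h3 : 3 ≤ p ⟨0, hs⟩)
    (b : Module.Basis (PyramidBox p r) K V)
    (F Ft Pplus W1 PVpp PVpd : Module.End K V)
    (hF : ∀ x : PyramidBox p r,
      F (b x) = if h : (x.2.2 : ℕ) + 1 < p x.1
        then b ⟨x.1, x.2.1, ⟨(x.2.2 : ℕ) + 1, h⟩⟩ else 0)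
    (hFt : ∀ x : PyramidBox p r,
      Ft (b x) = if 0 < (x.2.2 : ℕ)
        then b ⟨x.1, x.2.1, ⟨(x.2.2 : ℕ) - 1, Nat.lt_of_le_of_lt (Nat.sub_le _ _) x.2.2.isLt⟩⟩
        else 0)
    (hPplus : ∀ x : PyramidBox p r, Pplus (b x) = if (x.2.2 : ℕ) = 0 then b x else 0)
    (hW1 : ∀ x : PyramidBox p r,
      W1 (b x) = if ((x.2.2 : ℕ) + 1 = p x.1 ∧ p x.1 + 1 = p ⟨0, hs⟩) then b x else 0)
    (hPVpp : ∀ x : PyramidBox p r,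
      PVpp (b x) = if (x.2.2 : ℕ) = min (p x.1 - 1) (p ⟨0, hs⟩ - 3) then b x else 0)
    (hPVpd : ∀ x : PyramidBox p r,
      PVpd (b x) = if (x.2.2 : ℕ) = p ⟨0, hs⟩ - 2 then b x else 0) :
    ((-1 : K) ^ (p ⟨0, hs⟩)) •
      (Polynomial.C W1 * Polynomial.C (F ^ (p ⟨0, hs⟩ - 2)) * Polynomial.C Pplus *
        (∑ m ∈ Finset.range (p ⟨0, hs⟩),
          ((-1 : K) ^ m) • (Polynomial.C (Ft ^ m) * Polynomial.X ^ m)) *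
        Polynomial.C PVpp * Polynomial.C Ft * Polynomial.C PVpd).coeff (p ⟨0, hs⟩ - 3)
      = -W1 := by
  set P := p ⟨0, hs⟩ with hPdef
  -- powers of the right shift
  have hFt_pow : ∀ (m : ℕ) (x : PyramidBox p r), (Ft ^ m) (b x) =
      if m ≤ (x.2.2 : ℕ) then
        b ⟨x.1, x.2.1, ⟨(x.2.2 : ℕ) - m,
          Nat.lt_of_le_of_lt (Nat.sub_le _ _) x.2.2.isLt⟩⟩ else 0 := by
    intro m
    induction m with
    | zero => intro x; simp
    | succ m ih =>
      intro x
      rw [pow_succ, Module.End.mul_apply, hFt x]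
      by_cases h0 : 0 < (x.2.2 : ℕ)
      · rw [if_pos h0, ih]
        by_cases h1 : m ≤ (x.2.2 : ℕ) - 1
        · rw [if_pos h1, if_pos (by omega)]
          have hv : (x.2.2 : ℕ) - 1 - m = (x.2.2 : ℕ) - (m + 1) := by omega
          simp [hv]
        · rw [if_neg h1, if_neg (by omega)]
      · rw [if_neg h0, map_zero, if_neg (by omega)]
  -- powers of the left shift
  have hF_pow : ∀ (n : ℕ) (x : PyramidBox p r), (F ^ n) (b x) =
      if h : (x.2.2 : ℕ) + n < p x.1 then b ⟨x.1, x.2.1, ⟨(x.2.2 : ℕ) + n, h⟩⟩ else 0 := by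
    intro n
    induction n with
    | zero => intro x; simp [x.2.2.isLt]
    | succ n ih =>
      intro x
      rw [pow_succ', Module.End.mul_apply, ih x]
      by_cases h1 : (x.2.2 : ℕ) + n < p x.1
      · rw [dif_pos h1, hF]
        by_cases h2 : (x.2.2 : ℕ) + n + 1 < p x.1
        · rw [dif_pos h2, dif_pos (by omega)]; rfl
        · rw [dif_neg h2, dif_neg (by omega)]
      · rw [dif_neg h1, map_zero, dif_neg (by omega)]
  -- the key composite identity
  have key : W1 * F ^ (P - 2) * Pplus * Ft ^ (P - 3) * PVpp * Ft * PVpd = W1 := by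
    apply Module.Basis.ext b
    intro x
    simp only [Module.End.mul_apply]
    by_cases hj : (x.2.2 : ℕ) = P - 2
    · have hlt := x.2.2.isLt
      rw [hPVpd, if_pos hj, hFt, if_pos (by omega)]
      rw [hPVpp, if_pos (show ((x.2.2 : ℕ) - 1 : ℕ) = min (p x.1 - 1) (P - 3) by omega)]
      rw [hFt_pow, if_pos (show P - 3 ≤ (x.2.2 : ℕ) - 1 by omega)]
      rw [hPplus, if_pos (show ((x.2.2 : ℕ) - 1 - (P - 3) : ℕ) = 0 by omega)]
      rw [hF_pow, dif_pos (show ((x.2.2 : ℕ) - 1 - (P - 3)) + (P - 2) < p x.1 by omega)]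
      have hA : ((x.2.2 : ℕ) - 1 - (P - 3)) + (P - 2) = (x.2.2 : ℕ) := by omega
      simp only [hA, Fin.eta]
    · rw [hPVpd, if_neg hj]
      simp only [map_zero]
      rw [hW1, if_neg]
      rintro ⟨h1, h2⟩
      exact hj (by omega)
  -- compute the coefficient
  rw [show Polynomial.C W1 * Polynomial.C (F ^ (P - 2)) * Polynomial.C Pplus
      = Polynomial.C (W1 * F ^ (P - 2) * Pplus) by rw [map_mul, map_mul]]
  simp only [Polynomial.coeff_mul_C, Polynomial.coeff_C_mul, Polynomial.finset_sum_coeff,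
    Polynomial.coeff_smul, Polynomial.coeff_X_pow, mul_ite, mul_one, mul_zero, smul_ite,
    smul_zero]
  rw [Finset.sum_ite_eq]
  rw [if_pos (Finset.mem_range.2 (by omega))]
  simp only [mul_smul_comm, smul_mul_assoc, smul_smul]
  rw [← pow_add]
  have hodd : Odd (P + (P - 3)) := ⟨P - 2, by omega⟩
  rw [hodd.neg_one_pow, neg_one_smul, key]
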